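/- For every integer s ≥ 1 and every n ∈ ℕ, one has (n+s) · ∑_{m₁+⋯+m_s = n} Cat_{m₁} ⋯ Cat_{m_s} = s · binom(2n+s−1, n), where the sum is over all s-tuples (m₁,…,m_s) of nonnegative integers with m₁+⋯+m_s = n. -/

import Mathlib

open Finset PowerSeries

noncomputable def A (s n : ℕ) : ℕ := ∑ m ∈ Finset.Nat.antidiagonalTuple s n, ∏ i, catalan (m i)

lemma sum_adT_succ {M : Type*} [AddCommMonoid M] (s n : ℕ) (f : (Fin (s+1) → ℕ) → M) :
    ∑ m ∈ Finset.Nat.antidiagonalTuple (s+1) n, f m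
      = ∑ ij ∈ Finset.HasAntidiagonal.antidiagonal n,
          ∑ x ∈ Finset.Nat.antidiagonalTuple s ij.2, f (Fin.cons ij.1 x) := by
  rw [Finset.sum_sigma']
  refine Finset.sum_nbij' (i := fun m => ⟨(m 0, n - m 0), Fin.tail m⟩)
    (j := fun p => Fin.cons p.1.1 p.2) ?_ ?_ ?_ ?_ ?_
  · intro m hm
    rw [Finset.Nat.mem_antidiagonalTuple] at hm
    have h0 : m 0 ≤ n := by
      rw [← hm]; exact Finset.single_le_sum (f := m) (fun i _ => Nat.zero_le _) (mem_univ 0)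
    simp only [Finset.mem_sigma, Finset.HasAntidiagonal.mem_antidiagonal, Finset.Nat.mem_antidiagonalTuple]
    constructor
    · omega
    · have := Fin.sum_univ_succ m
      rw [hm] at this
      simp only [Fin.tail]
      omega
  · intro p hp
    simp only [Finset.mem_sigma, Finset.HasAntidiagonal.mem_antidiagonal,
      Finset.Nat.mem_antidiagonalTuple] at hp ⊢
    rw [Fin.sum_univ_succ]
    simp [Fin.cons_zero, Fin.cons_succ]
    obtain ⟨h1, h2⟩ := hp
    have : ∑ i : Fin s, Fin.cons (α := fun _ => ℕ) p.1.1 p.2 i.succ = p.1.2 := by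
      simp [Fin.cons_succ]; exact h2
    omega
  · intro m hm
    exact Fin.cons_self_tail m
  · rintro ⟨⟨i, j⟩, x⟩ hp
    simp only [Finset.mem_sigma, Finset.HasAntidiagonal.mem_antidiagonal,
      Finset.Nat.mem_antidiagonalTuple] at hp
    obtain ⟨h1, h2⟩ := hp
    simp only [Fin.cons_zero, Fin.tail_cons]
    have hj : n - i = j := by omega
    simp [hj]
  · intro m hm
    rw [Fin.cons_self_tail]

noncomputable def CS : PowerSeries ℕ := PowerSeries.mk catalan

lemma coeff_CS_pow (s n : ℕ) : (PowerSeries.coeff n) (CS ^ s) = A s n := by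
  induction s generalizing n with
  | zero =>
    simp only [pow_zero, PowerSeries.coeff_one, A]
    cases n with
    | zero => simp
    | succ k => simp [Finset.Nat.antidiagonalTuple_zero_succ]
  | succ s ih =>
    rw [pow_succ', PowerSeries.coeff_mul, A, sum_adT_succ]
    refine Finset.sum_congr rfl fun ij _ => ?_
    rw [ih ij.2, A, CS, PowerSeries.coeff_mk, Finset.mul_sum]
    refine Finset.sum_congr rfl fun x _ => ?_
    rw [Fin.prod_univ_succ]
    simp [Fin.cons_zero, Fin.cons_succ]

lemma CS_eq : CS = 1 + PowerSeries.X * CS ^ 2 := by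
  ext n
  cases n with
  | zero => simp [CS]
  | succ k =>
    simp only [map_add, PowerSeries.coeff_succ_X_mul, PowerSeries.coeff_one, CS]
    rw [PowerSeries.coeff_mk, sq, PowerSeries.coeff_mul, catalan_succ']
    simp [PowerSeries.coeff_mk]

lemma A_rec (s n : ℕ) : A (s+1) (n+1) = A s (n+1) + A (s+2) n := by
  have h : CS ^ (s+1) = CS ^ s + PowerSeries.X * CS ^ (s+2) := by
    rw [pow_succ]
    nth_rw 2 [CS_eq]
    ring
  have := congrArg (PowerSeries.coeff (R := ℕ) (n+1)) h
  rwa [map_add, PowerSeries.coeff_succ_X_mul, coeff_CS_pow, coeff_CS_pow, coeff_CS_pow] at this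

lemma A_zero_right (s : ℕ) : A s 0 = 1 := by
  simp [A, Finset.Nat.antidiagonalTuple_zero_right]

lemma A_zero_left (n : ℕ) : A 0 (n+1) = 0 := by
  simp [A, Finset.Nat.antidiagonalTuple_zero_succ]

lemma key : ∀ n s, (n + s) * A s n = s * Nat.choose (2*n + s - 1) n := by
  intro n
  induction n with
  | zero => intro s; simp [A_zero_right]
  | succ n ihn =>
    intro s
    induction s with
    | zero => simp [A_zero_left]
    | succ s ihs =>
      have hrec := A_rec s n
      have hn2 := ihn (s+2)
      have harith1 : 2*n + (s+2) - 1 = 2*n + s + 1 := by omega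
      have harith2 : 2*(n+1) + s - 1 = 2*n + s + 1 := by omega
      have harith3 : 2*(n+1) + (s+1) - 1 = 2*n + s + 2 := by omega
      rw [harith1] at hn2
      rw [harith2] at ihs
      rw [harith3, hrec]
      -- set a := C(2n+s+1, n+1), b := C(2n+s+1, n)
      set a := Nat.choose (2*n+s+1) (n+1) with ha
      set b := Nat.choose (2*n+s+1) n with hb
      have habs : a * (n+1) = b * (n + s + 1) := by
        have := Nat.choose_succ_right_eq (2*n+s+1) n
        rw [← ha, ← hb] at this
        have h2 : 2*n+s+1 - n = n + s + 1 := by omega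
        rw [h2] at this
        exact this
      have hpascal : Nat.choose (2*n+s+2) (n+1) = b + a := by
        rw [show 2*n+s+2 = (2*n+s+1)+1 by ring, Nat.choose_succ_succ]
      -- cancel (n+s+1)
      have hpos : 0 < n + s + 1 := by omega
      apply Nat.eq_of_mul_eq_mul_left hpos
      rw [hpascal]
      -- goal over naturals; cast to ℤ and linear_combination
      zify
      zify at ihs hn2 habs
      linear_combination (↑n + ↑s + 2) * ihs + (↑n + ↑s + 1) * hn2 - habs
      -- may need fixing

/-- For `s ≥ 1` and `n ∈ ℕ`,
`(n+s) · ∑_{m₁+⋯+m_s = n} Cat_{m₁} ⋯ Cat_{m_s} = s · binom(2n+s−1, n)`. -/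
theorem stmt_12 (s : ℕ) (hs : 1 ≤ s) (n : ℕ) :
    (n + s) * ∑ m ∈ Finset.Nat.antidiagonalTuple s n, ∏ i, catalan (m i) =
      s * Nat.choose (2 * n + s - 1) n := by
  simpa [A] using key n s
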